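/- Two binary words w and w' have the same Parikh set of factors, Π(w) = Π(w'), if and only if PNF_a(w) = PNF_a(w') and PNF_b(w) = PNF_b(w'). -/

import Mathlib

/- Binary words are `List Bool`, with letter `a = false` and `b = true`
   (so that `a < b` in the `Bool` order). -/

/-- number of `a`'s in the prefix of length `k` -/
def Pa (w : List Bool) (k : ℕ) : ℕ := (w.take k).count false

/-- number of `b`'s in the prefix of length `k` -/
def Pb (w : List Bool) (k : ℕ) : ℕ := (w.take k).count true

/-- maximum number of `a`'s in a factor of `w` of length `k` -/
noncomputable def Fa (w : List Bool) (k : ℕ) : ℕ :=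
  sSup {n | ∃ v : List Bool, v <:+: w ∧ v.length = k ∧ v.count false = n}

/-- maximum number of `b`'s in a factor of `w` of length `k` -/
noncomputable def Fb (w : List Bool) (k : ℕ) : ℕ :=
  sSup {n | ∃ v : List Bool, v <:+: w ∧ v.length = k ∧ v.count true = n}

/-- minimum number of `a`'s in a factor of `w` of length `k` -/
noncomputable def fa (w : List Bool) (k : ℕ) : ℕ :=
  sInf {n | ∃ v : List Bool, v <:+: w ∧ v.length = k ∧ v.count false = n}

/-- `w` is prefix normal w.r.t. `a`: no factor has more `a`'s than the prefix
    of the same length -/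
def PrefixNormal (w : List Bool) : Prop :=
  ∀ v : List Bool, v <:+: w → v.count false ≤ Pa w v.length

/-- position of the `i`-th `a` in `w` -/
noncomputable def posA (w : List Bool) (i : ℕ) : ℕ := sInf {k | Pa w k = i}

/-- `u` is the prefix normal form of `w` w.r.t. `a` -/
def IsPNFa (w u : List Bool) : Prop :=
  u.length = w.length ∧ ∀ k ≤ w.length, Pa u k = Fa w k ∧ Fa u k = Fa w k

/-- `u` is the prefix normal form of `w` w.r.t. `b` -/
def IsPNFb (w u : List Bool) : Prop :=
  u.length = w.length ∧ ∀ k ≤ w.length, Pb u k = Fb w k ∧ Fb u k = Fb w k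

/-- the Parikh set of `w`: Parikh vectors `(|v|_a, |v|_b)` of factors of `w` -/
def ParikhSet (w : List Bool) : Set (ℕ × ℕ) :=
  {p | ∃ v : List Bool, v <:+: w ∧ p = (v.count false, v.count true)}

/-- Lyndon word: strictly lexicographically smaller than each proper nonempty suffix -/
def IsLyndon (w : List Bool) : Prop :=
  w ≠ [] ∧ ∀ v : List Bool, v <:+ w → v ≠ [] → v ≠ w → List.Lex (· < ·) w v

/-- pre-necklace: a power of the letter `b`, or a prefix of a Lyndon word -/
def PreNecklace (w : List Bool) : Prop :=
  (∃ n, w = List.replicate n true) ∨ ∃ v, IsLyndon v ∧ w <+: v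
section Aux

lemma cnt_add (l : List Bool) : l.count false + l.count true = l.length := by
  induction l with
  | nil => simp
  | cons a t ih => cases a <;> simp [List.count_cons] <;> omega

lemma window_infix (w : List Bool) (i k : ℕ) : (w.drop i).take k <:+: w :=
  ((w.drop i).take_prefix k).isInfix.trans (w.drop_suffix i).isInfix

lemma infix_window {v w : List Bool} (h : v <:+: w) :
    ∃ i, i + v.length ≤ w.length ∧ v = (w.drop i).take v.length := by
  obtain ⟨s, t, rfl⟩ := h
  refine ⟨s.length, by simp, ?_⟩
  rw [List.append_assoc, List.drop_left, List.take_left]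

lemma step_window (w : List Bool) (c : Bool) (k i : ℕ) :
    ((w.drop (i+1)).take k).count c ≤ ((w.drop i).take k).count c + 1 ∧
    ((w.drop i).take k).count c ≤ ((w.drop (i+1)).take k).count c + 1 := by
  rcases lt_or_ge i w.length with h | h
  · rw [List.drop_eq_getElem_cons h]
    cases k with
    | zero => simp
    | succ m =>
      rw [List.take_succ_cons, List.take_succ, List.count_append, List.count_cons]
      simp only [beq_iff_eq]
      have h1 : ((w.drop (i+1))[m]?.toList).count c ≤ 1 := by
        cases (w.drop (i+1))[m]? with
        | none => simp
        | some x => simp only [Option.toList, List.count_cons, List.count_nil, beq_iff_eq]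
                    split <;> omega
      have h2 : (if w[i] = c then 1 else 0) ≤ 1 := by split <;> omega
      omega
  · rw [List.drop_eq_nil_of_le h, List.drop_eq_nil_of_le (by omega)]
    exact ⟨Nat.le_succ _, Nat.le_succ _⟩

lemma ivt_up (f : ℕ → ℕ) (hstep : ∀ i, f (i+1) ≤ f i + 1) (p : ℕ) :
    ∀ d i, f i ≤ p → p ≤ f (i + d) → ∃ m, f m = p := by
  intro d
  induction d with
  | zero => intro i h1 h2; exact ⟨i, le_antisymm h1 h2⟩
  | succ d ih =>
    intro i h1 h2
    by_cases h : p ≤ f (i + d)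
    · exact ih i h1 h
    · refine ⟨i + d + 1, ?_⟩
      have := hstep (i + d)
      have h2' : p ≤ f (i + d + 1) := by rw [Nat.add_succ] at h2; exact h2
      omega

lemma ivt_down (f : ℕ → ℕ) (hstep : ∀ i, f i ≤ f (i+1) + 1) (p : ℕ) :
    ∀ d i, p ≤ f i → f (i + d) ≤ p → ∃ m, f m = p := by
  intro d
  induction d with
  | zero => intro i h1 h2; exact ⟨i, le_antisymm h2 h1⟩
  | succ d ih =>
    intro i h1 h2
    by_cases h : p ≤ f (i + 1)
    · refine ih (i+1) h ?_
      have : i + 1 + d = i + (d + 1) := by omega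
      rw [this]; exact h2
    · exact ⟨i, by have := hstep i; omega⟩

lemma ivt (f : ℕ → ℕ) (h1 : ∀ i, f (i+1) ≤ f i + 1) (h2 : ∀ i, f i ≤ f (i+1) + 1)
    (i j p : ℕ) (hi : f i ≤ p) (hj : p ≤ f j) : ∃ m, f m = p := by
  rcases le_or_gt i j with h | h
  · obtain ⟨d, rfl⟩ := Nat.exists_eq_add_of_le h
    exact ivt_up f h1 p d i hi hj
  · obtain ⟨d, rfl⟩ := Nat.exists_eq_add_of_le h.le
    exact ivt_down f h2 p d j hj hi

lemma sSup_spec (w : List Bool) (c : Bool) (k : ℕ) (hk : k ≤ w.length) :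
    (∃ v, v <:+: w ∧ v.length = k ∧
      v.count c = sSup {n | ∃ v : List Bool, v <:+: w ∧ v.length = k ∧ v.count c = n}) ∧
    ∀ v : List Bool, v <:+: w → v.length = k →
      v.count c ≤ sSup {n | ∃ v : List Bool, v <:+: w ∧ v.length = k ∧ v.count c = n} := by
  have hne : {n | ∃ v : List Bool, v <:+: w ∧ v.length = k ∧ v.count c = n}.Nonempty :=
    ⟨(w.take k).count c, w.take k, (w.take_prefix k).isInfix, by simp [hk], rfl⟩
  have hbdd : BddAbove {n | ∃ v : List Bool, v <:+: w ∧ v.length = k ∧ v.count c = n} := by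
    refine ⟨k, ?_⟩
    rintro n ⟨v, _, hl, rfl⟩
    exact hl ▸ (List.count_le_length : v.count c ≤ v.length)
  exact ⟨Nat.sSup_mem hne hbdd, fun v hv hl => le_csSup hbdd ⟨v, hv, hl, rfl⟩⟩

lemma sInf_spec (w : List Bool) (c : Bool) (k : ℕ) (hk : k ≤ w.length) :
    (∃ v, v <:+: w ∧ v.length = k ∧
      v.count c = sInf {n | ∃ v : List Bool, v <:+: w ∧ v.length = k ∧ v.count c = n}) ∧
    ∀ v : List Bool, v <:+: w → v.length = k →
      sInf {n | ∃ v : List Bool, v <:+: w ∧ v.length = k ∧ v.count c = n} ≤ v.count c := by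
  have hne : {n | ∃ v : List Bool, v <:+: w ∧ v.length = k ∧ v.count c = n}.Nonempty :=
    ⟨(w.take k).count c, w.take k, (w.take_prefix k).isInfix, by simp [hk], rfl⟩
  exact ⟨Nat.sInf_mem hne, fun v hv hl => Nat.sInf_le ⟨v, hv, hl, rfl⟩⟩

end Aux
section Aux2

lemma Fa_exists {w : List Bool} {k : ℕ} (hk : k ≤ w.length) :
    ∃ v, v <:+: w ∧ v.length = k ∧ v.count false = Fa w k := (sSup_spec w false k hk).1

lemma Fa_ub {w : List Bool} {k : ℕ} (hk : k ≤ w.length) :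
    ∀ v : List Bool, v <:+: w → v.length = k → v.count false ≤ Fa w k := (sSup_spec w false k hk).2

lemma Fb_exists {w : List Bool} {k : ℕ} (hk : k ≤ w.length) :
    ∃ v, v <:+: w ∧ v.length = k ∧ v.count true = Fb w k := (sSup_spec w true k hk).1

lemma Fb_ub {w : List Bool} {k : ℕ} (hk : k ≤ w.length) :
    ∀ v : List Bool, v <:+: w → v.length = k → v.count true ≤ Fb w k := (sSup_spec w true k hk).2

lemma fa_exists {w : List Bool} {k : ℕ} (hk : k ≤ w.length) :
    ∃ v, v <:+: w ∧ v.length = k ∧ v.count false = fa w k := (sInf_spec w false k hk).1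

lemma fa_lb {w : List Bool} {k : ℕ} (hk : k ≤ w.length) :
    ∀ v : List Bool, v <:+: w → v.length = k → fa w k ≤ v.count false := (sInf_spec w false k hk).2

lemma fa_add_Fb {w : List Bool} {k : ℕ} (hk : k ≤ w.length) : fa w k + Fb w k = k := by
  obtain ⟨v1, h1, hl1, hc1⟩ := Fb_exists hk
  obtain ⟨v2, h2, hl2, hc2⟩ := fa_exists hk
  have c1 := cnt_add v1
  have c2 := cnt_add v2
  have u1 := fa_lb hk v1 h1 hl1
  have u2 := Fb_ub hk v2 h2 hl2
  omega

lemma mem_parikh {w : List Bool} {p q : ℕ} :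
    (p, q) ∈ ParikhSet w ↔ p + q ≤ w.length ∧ p ≤ Fa w (p+q) ∧ q ≤ Fb w (p+q) := by
  constructor
  · rintro ⟨v, hv, he⟩
    rw [Prod.mk.injEq] at he
    obtain ⟨h1, h2⟩ := he
    subst h1; subst h2
    have hc := cnt_add v
    have hle := hv.length_le
    have hk : v.count false + v.count true ≤ w.length := by omega
    exact ⟨hk, Fa_ub hk v hv (by omega), Fb_ub hk v hv (by omega)⟩
  · rintro ⟨hk', hp, hq⟩
    set k := p + q with hkdef
    have hfa_le : fa w k ≤ p := by have := fa_add_Fb hk'; omega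
    set f : ℕ → ℕ := fun i => ((w.drop (min i (w.length - k))).take k).count false with hf
    have hstep1 : ∀ i, f (i+1) ≤ f i + 1 := by
      intro i
      rcases lt_or_ge i (w.length - k) with h | h
      · have e1 : min i (w.length - k) = i := by omega
        have e2 : min (i+1) (w.length - k) = i + 1 := by omega
        simp only [hf, e1, e2]
        exact (step_window w false k i).1
      · have e : min (i+1) (w.length - k) = min i (w.length - k) := by omega
        simp only [hf, e]
        omega
    have hstep2 : ∀ i, f i ≤ f (i+1) + 1 := by
      intro i
      rcases lt_or_ge i (w.length - k) with h | h
      · have e1 : min i (w.length - k) = i := by omega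
        have e2 : min (i+1) (w.length - k) = i + 1 := by omega
        simp only [hf, e1, e2]
        exact (step_window w false k i).2
      · have e : min (i+1) (w.length - k) = min i (w.length - k) := by omega
        simp only [hf, e]
        omega
    obtain ⟨v1, hv1, hl1, hc1⟩ := Fa_exists hk'
    obtain ⟨i₀, hi₀, hw1⟩ := infix_window hv1
    rw [hl1] at hi₀ hw1
    obtain ⟨v2, hv2, hl2, hc2⟩ := fa_exists hk'
    obtain ⟨j₀, hj₀, hw2⟩ := infix_window hv2
    rw [hl2] at hj₀ hw2
    have hfi : f i₀ = Fa w k := by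
      have e : min i₀ (w.length - k) = i₀ := by omega
      simp only [hf, e]
      rw [← hw1]; exact hc1
    have hfj : f j₀ = fa w k := by
      have e : min j₀ (w.length - k) = j₀ := by omega
      simp only [hf, e]
      rw [← hw2]; exact hc2
    obtain ⟨m, hm⟩ := ivt f hstep1 hstep2 j₀ i₀ p (by omega) (by omega)
    set i' := min m (w.length - k) with hi'
    have hle' : i' ≤ w.length - k := min_le_right _ _
    have hik : i' + k ≤ w.length := by omega
    refine ⟨(w.drop i').take k, window_infix w i' k, ?_⟩
    have hlw : ((w.drop i').take k).length = k := by
      rw [List.length_take, List.length_drop]; omega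
    have hcf : ((w.drop i').take k).count false = p := hm
    have hct : ((w.drop i').take k).count true = q := by
      have := cnt_add ((w.drop i').take k)
      omega
    rw [hcf, hct]

lemma ext_count {c : Bool} {x y : List Bool} (hl : x.length = y.length)
    (h : ∀ k ≤ x.length, (x.take k).count c = (y.take k).count c) : x = y := by
  apply List.ext_getElem hl
  intro i h1 h2
  have e1 := h i (le_of_lt h1)
  have e2 := h (i+1) h1
  rw [List.take_succ, List.take_succ, List.count_append, List.count_append,
    List.getElem?_eq_getElem h1, List.getElem?_eq_getElem h2] at e2
  cases hx : x[i] <;> cases hy : y[i] <;> rw [hx, hy] at e2 <;> cases c <;> simp_all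

lemma parikh_len_le {w w' : List Bool} (h : ParikhSet w ⊆ ParikhSet w') :
    w.length ≤ w'.length := by
  obtain ⟨v, hv, he⟩ := h ⟨w, List.infix_refl w, rfl⟩
  rw [Prod.mk.injEq] at he
  have := cnt_add w
  have := cnt_add v
  have := hv.length_le
  omega

lemma set_eq_of_parikh {w w' : List Bool} (h : ParikhSet w = ParikhSet w') (c : Bool) (k : ℕ) :
    {n | ∃ v : List Bool, v <:+: w ∧ v.length = k ∧ v.count c = n} =
    {n | ∃ v : List Bool, v <:+: w' ∧ v.length = k ∧ v.count c = n} := by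
  have key : ∀ x y : List Bool, ParikhSet x ⊆ ParikhSet y →
      {n | ∃ v : List Bool, v <:+: x ∧ v.length = k ∧ v.count c = n} ⊆
      {n | ∃ v : List Bool, v <:+: y ∧ v.length = k ∧ v.count c = n} := by
    rintro x y hxy n ⟨v, hv, hlv, hcv⟩
    obtain ⟨v', hv', he⟩ := hxy ⟨v, hv, rfl⟩
    rw [Prod.mk.injEq] at he
    have := cnt_add v
    have := cnt_add v'
    refine ⟨v', hv', by omega, ?_⟩
    cases c <;> omega
  exact Set.Subset.antisymm (key w w' (le_of_eq h)) (key w' w (le_of_eq h.symm))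

lemma Fa_eq_of_parikh {w w' : List Bool} (h : ParikhSet w = ParikhSet w') (k : ℕ) :
    Fa w k = Fa w' k := congrArg sSup (set_eq_of_parikh h false k)

lemma Fb_eq_of_parikh {w w' : List Bool} (h : ParikhSet w = ParikhSet w') (k : ℕ) :
    Fb w k = Fb w' k := congrArg sSup (set_eq_of_parikh h true k)

end Aux2

theorem stmt8 (w w' u u' v v' : List Bool)
    (hu : IsPNFa w u) (hu' : IsPNFa w' u')
    (hv : IsPNFb w v) (hv' : IsPNFb w' v') :
    ParikhSet w = ParikhSet w' ↔ u = u' ∧ v = v' := by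
  obtain ⟨hul, hup⟩ := hu
  obtain ⟨hul', hup'⟩ := hu'
  obtain ⟨hvl, hvp⟩ := hv
  obtain ⟨hvl', hvp'⟩ := hv'
  constructor
  · intro hP
    have hlen : w.length = w'.length :=
      le_antisymm (parikh_len_le (le_of_eq hP)) (parikh_len_le (le_of_eq hP.symm))
    refine ⟨?_, ?_⟩
    · apply ext_count (c := false) (by rw [hul, hul', hlen])
      intro k hk
      rw [hul] at hk
      have hk2 : k ≤ w'.length := by rwa [hlen] at hk
      show Pa u k = Pa u' k
      rw [(hup k hk).1, (hup' k hk2).1, Fa_eq_of_parikh hP]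
    · apply ext_count (c := true) (by rw [hvl, hvl', hlen])
      intro k hk
      rw [hvl] at hk
      have hk2 : k ≤ w'.length := by rwa [hlen] at hk
      show Pb v k = Pb v' k
      rw [(hvp k hk).1, (hvp' k hk2).1, Fb_eq_of_parikh hP]
  · rintro ⟨hequ, heqv⟩
    have hlen : w.length = w'.length := by rw [← hul, hequ, hul']
    ext ⟨p, q⟩
    show (p, q) ∈ ParikhSet w ↔ (p, q) ∈ ParikhSet w'
    rw [mem_parikh, mem_parikh]
    by_cases hpq : p + q ≤ w.length
    · have hpq' : p + q ≤ w'.length := hlen ▸ hpq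
      have hFa : Fa w (p+q) = Fa w' (p+q) := by
        rw [← (hup _ hpq).1, ← (hup' _ hpq').1, hequ]
      have hFb : Fb w (p+q) = Fb w' (p+q) := by
        rw [← (hvp _ hpq).1, ← (hvp' _ hpq').1, heqv]
      rw [hFa, hFb, hlen]
    · constructor <;> rintro ⟨h1, -⟩ <;> omega
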